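/- Define, for θ > 0, z̃₂(θ) = 6(sinh 2θ − 2θ)²/(cosh 2θ − 1)³, w̃₀(θ) = (sinh 2θ − 2θ)(sinh 2θ)/(cosh 2θ − 1)², and T(θ) = (sinh 2θ − 2θ)/2. Then for all θ > 0: T(θ)·z̃₂′(θ) = (cosh 2θ − 1)·(2z̃₂(θ) − 3z̃₂(θ)w̃₀(θ)) and T(θ)·w̃₀′(θ) = (cosh 2θ − 1)·(−(1/6)z̃₂(θ) + w̃₀(θ) − w̃₀(θ)²). Equivalently, since T′ = cosh 2θ − 1, the curve (z̃₂, w̃₀) reparametrized by τ = ln T(θ) is a solution of the order n = 1 STV ODE dz₂/dτ = 2z₂ − 3z₂w₀, dw₀/dτ = −(1/6)z₂ + w₀ − w₀². -/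

import Mathlib

open Real Set Filter

/-- Leading-order density coefficient of the pressureless `k = −1` Friedmann spacetime. -/
noncomputable def z2F (θ : ℝ) : ℝ :=
  6 * (Real.sinh (2 * θ) - 2 * θ) ^ 2 / (Real.cosh (2 * θ) - 1) ^ 3

/-- Leading-order velocity coefficient of the pressureless `k = −1` Friedmann spacetime. -/
noncomputable def w0F (θ : ℝ) : ℝ :=
  (Real.sinh (2 * θ) - 2 * θ) * Real.sinh (2 * θ) / (Real.cosh (2 * θ) - 1) ^ 2

/-- `T θ = (sinh 2θ − 2θ)/2`. -/
noncomputable def T (θ : ℝ) : ℝ := (Real.sinh (2 * θ) - 2 * θ) / 2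

private lemma hsd (θ : ℝ) :
    HasDerivAt (fun x => Real.sinh (2 * x)) (Real.cosh (2 * θ) * 2) θ := by
  exact ((Real.hasDerivAt_sinh (2 * θ)).comp θ ((hasDerivAt_id θ).const_mul 2)).congr_deriv
    (by ring)

private lemma hcd (θ : ℝ) :
    HasDerivAt (fun x => Real.cosh (2 * x)) (Real.sinh (2 * θ) * 2) θ := by
  exact ((Real.hasDerivAt_cosh (2 * θ)).comp θ ((hasDerivAt_id θ).const_mul 2)).congr_deriv
    (by ring)

/-- The `k = −1` Friedmann curve solves the order `n = 1` STV ODE (in `τ = ln T θ`). -/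
theorem k_neg_orbit_solves_STV_ODE_order_one (θ : ℝ) (hθ : 0 < θ) :
    T θ * deriv z2F θ =
      (Real.cosh (2 * θ) - 1) * (2 * z2F θ - 3 * z2F θ * w0F θ) ∧
    T θ * deriv w0F θ =
      (Real.cosh (2 * θ) - 1) * (-(1 / 6) * z2F θ + w0F θ - (w0F θ) ^ 2) := by
  have hD : Real.cosh (2 * θ) - 1 ≠ 0 := by
    have : 1 < Real.cosh (2 * θ) := Real.one_lt_cosh.mpr (by positivity)
    linarith
  have hsq : Real.sinh (2 * θ) ^ 2 = Real.cosh (2 * θ) ^ 2 - 1 := Real.sinh_sq (2 * θ)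
  have hA : HasDerivAt (fun x => Real.sinh (2 * x) - 2 * x)
      (Real.cosh (2 * θ) * 2 - 2 * 1) θ :=
    (hsd θ).sub ((hasDerivAt_id θ).const_mul 2)
  have hDen : HasDerivAt (fun x => Real.cosh (2 * x) - 1) (Real.sinh (2 * θ) * 2) θ :=
    (hcd θ).sub_const 1
  have hz : HasDerivAt z2F _ θ :=
    ((hA.pow 2).const_mul 6).div (hDen.pow 3) (pow_ne_zero 3 hD)
  have hw : HasDerivAt w0F _ θ :=
    (hA.mul (hsd θ)).div (hDen.pow 2) (pow_ne_zero 2 hD)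
  constructor
  · rw [hz.deriv]
    simp only [z2F, w0F, T, Pi.pow_apply, Pi.mul_apply]
    push_cast
    field_simp
  · rw [hw.deriv]
    simp only [z2F, w0F, T, Pi.pow_apply, Pi.mul_apply]
    push_cast
    field_simp
    linear_combination (-(Real.sinh (2 * θ) - 2 * θ) ^ 2) * hsq
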